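/- Let V be a 7-dimensional complex vector space and let a : V × V → V be an alternating bilinear map whose image spans V (equivalently, a surjective linear map A : Λ²V → V). For a linear functional p : V → ℂ let ω_p be the alternating bilinear form on V defined by ω_p(v,w) = p(a(v,w)), and let ker ω_p = {v ∈ V : ω_p(v,w) = 0 for all w ∈ V}. Define W : Hom(ℂ²,V) × V* → ℂ by W(x,p) = ω_p(x e₁, x e₂), where e₁,e₂ is the standard basis of ℂ². Assume: (i) for every p ≠ 0 the kernel of ω_p has dimension at most 3; (ii) for every p ≠ 0 with dim ker ω_p = 3, the linear map sending q ∈ V* to the restriction of ω_q to ker ω_p is surjective onto the space of alternating bilinear forms on ker ω_p. Then for every x ∈ Hom(ℂ²,V) and every p ≠ 0, the (complex Fréchet) derivative of W vanishes at (x,p) if and only if the range of x is contained in ker ω_p and the range of x has dimension at most 1. -/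

import Mathlib

open Module
open Matrix

/-- The continuous bilinear map associated to a bilinear map on a finite-dimensional
complex normed space. -/
noncomputable def acCLM {V : Type*} [NormedAddCommGroup V] [NormedSpace ℂ V]
    [FiniteDimensional ℂ V] (a : V →ₗ[ℂ] V →ₗ[ℂ] V) : V →L[ℂ] V →L[ℂ] V :=
  LinearMap.toContinuousLinearMap
    { toFun := fun v => LinearMap.toContinuousLinearMap (a v),
      map_add' := by intro u v; ext w; simp,
      map_smul' := by intro c u; ext w; simp }

@[simp] lemma acCLM_apply {V : Type*} [NormedAddCommGroup V] [NormedSpace ℂ V]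
    [FiniteDimensional ℂ V] (a : V →ₗ[ℂ] V →ₗ[ℂ] V) (v w : V) :
    acCLM a v w = a v w := by
  simp [acCLM]

attribute [irreducible] acCLM

set_option maxHeartbeats 1600000 in
/-- **Critical locus of the Hori–Tong superpotential** (Proposition 5.2).
`V` is a 7-dimensional complex vector space, `a : Λ²V → V` is (the bilinear avatar of)
a surjective linear map, `ω_p = p ∘ a` and `W (x, p) = ω_p (x e₁, x e₂)`.  Under the
genericity assumptions (i) and (ii), the derivative of `W` vanishes at `(x, p)` with
`p ≠ 0` if and only if `Im x ⊆ ker ω_p` and `rk x ≤ 1`. -/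
theorem critical_locus_of_superpotential
    {V : Type*} [NormedAddCommGroup V] [NormedSpace ℂ V] [FiniteDimensional ℂ V]
    (hV : finrank ℂ V = 7)
    (a : V →ₗ[ℂ] V →ₗ[ℂ] V)
    (halt : ∀ v : V, a v v = 0)
    (hspan : Submodule.span ℂ {v : V | ∃ x y : V, a x y = v} = ⊤)
    -- (i) for every `p ≠ 0` the kernel of `ω_p` has dimension at most 3
    (hker3 : ∀ p : V →ₗ[ℂ] ℂ, p ≠ 0 →
      finrank ℂ (LinearMap.ker (a.compr₂ p)) ≤ 3)
    -- (ii) where `dim ker ω_p = 3`, the map `q ↦ ω_q |_{ker ω_p}` is surjective onto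
    -- alternating bilinear forms on `ker ω_p`
    (htrans : ∀ p : V →ₗ[ℂ] ℂ, p ≠ 0 →
      finrank ℂ (LinearMap.ker (a.compr₂ p)) = 3 →
      ∀ β : (LinearMap.ker (a.compr₂ p)) →ₗ[ℂ] (LinearMap.ker (a.compr₂ p)) →ₗ[ℂ] ℂ,
        (∀ v, β v v = 0) →
        ∃ q : V →ₗ[ℂ] ℂ, ∀ v w : LinearMap.ker (a.compr₂ p),
          q (a v w) = β v w)
    (W : ((Fin 2 → ℂ) →L[ℂ] V) × (V →L[ℂ] ℂ) → ℂ)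
    (hW : ∀ (x : (Fin 2 → ℂ) →L[ℂ] V) (p : V →L[ℂ] ℂ),
      W (x, p) = p (a (x (Pi.single 0 1)) (x (Pi.single 1 1))))
    (x : (Fin 2 → ℂ) →L[ℂ] V) (p : V →L[ℂ] ℂ) (hp : p ≠ 0) :
    fderiv ℂ W (x, p) = 0 ↔
      (LinearMap.range x.toLinearMap ≤ LinearMap.ker (a.compr₂ p.toLinearMap) ∧
        finrank ℂ (LinearMap.range x.toLinearMap) ≤ 1) := by
  classical
  set e0 : Fin 2 → ℂ := Pi.single 0 1 with he0
  set e1 : Fin 2 → ℂ := Pi.single 1 1 with he1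
  -- skew symmetry of `a`
  have hskew : ∀ v w : V, a w v = - a v w := by
    intro v w
    have h := halt (v + w)
    simp only [map_add, LinearMap.add_apply, halt v, halt w, zero_add, add_zero] at h
    exact eq_neg_of_add_eq_zero_left h
  set pl : V →ₗ[ℂ] ℂ := p.toLinearMap with hpldef
  have hpl0 : pl ≠ 0 := by
    intro h
    apply hp
    ext v
    exact DFunLike.congr_fun h v
  set K := LinearMap.ker (a.compr₂ pl) with hK
  have hmemK : ∀ v : V, v ∈ K ↔ ∀ w, p (a v w) = 0 := by
    intro v
    simp only [hK, LinearMap.mem_ker, LinearMap.ext_iff, LinearMap.compr₂_apply,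
      LinearMap.zero_apply, hpldef, ContinuousLinearMap.coe_coe]
  -- the range of `x` is the span of the images of the two basis vectors
  have hx01 : ∀ f : Fin 2 → ℂ, x f = f 0 • x e0 + f 1 • x e1 := by
    intro f
    have hf : f = f 0 • e0 + f 1 • e1 := by
      funext i
      fin_cases i <;> simp [he0, he1]
    rw [show x f = x (f 0 • e0 + f 1 • e1) by rw [← hf]]
    simp [map_add, _root_.map_smul]
  have hrange : LinearMap.range x.toLinearMap = Submodule.span ℂ {x e0, x e1} := by
    apply le_antisymm
    · rintro v ⟨f, rfl⟩
      rw [ContinuousLinearMap.coe_coe, hx01 f]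
      refine Submodule.add_mem _ (Submodule.smul_mem _ _ ?_) (Submodule.smul_mem _ _ ?_) <;>
        exact Submodule.subset_span (by simp)
    · rw [Submodule.span_le]
      rintro v hv
      simp only [Set.mem_insert_iff, Set.mem_singleton_iff] at hv
      rcases hv with rfl | rfl
      · exact ⟨e0, rfl⟩
      · exact ⟨e1, rfl⟩
  -- a pair spanning a subspace of dimension ≥ 2 whose product vanishes is impossible
  have hsing : ∀ u : V, finrank ℂ (Submodule.span ℂ {u}) ≤ 1 := by
    intro u
    by_cases hu : u = 0
    · subst hu
      rw [Submodule.span_zero_singleton]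
      simp
    · rw [finrank_span_singleton hu]
  have hdep_rank : ∀ v w : V, ¬ LinearIndependent ℂ ![v, w] →
      finrank ℂ (Submodule.span ℂ {v, w}) ≤ 1 := by
    intro v w hdep
    by_cases hv0 : v = 0
    · subst hv0
      rw [show ({(0 : V), w} : Set V) = insert (0 : V) {w} by rfl,
        Submodule.span_insert_zero]
      exact hsing w
    · rw [LinearIndependent.pair_iff' hv0] at hdep
      push_neg at hdep
      obtain ⟨c, rfl⟩ := hdep
      refine le_trans (Submodule.finrank_mono ?_) (hsing v)
      rw [Submodule.span_le]
      rintro u hu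
      simp only [Set.mem_insert_iff, Set.mem_singleton_iff] at hu
      rcases hu with rfl | rfl
      · exact Submodule.mem_span_singleton_self _
      · exact Submodule.smul_mem _ _ (Submodule.mem_span_singleton_self _)
  have hkey : ∀ v w : V, v ∈ K → w ∈ K → a v w = 0 → ¬ LinearIndependent ℂ ![v, w] := by
    intro v w hv hw havw hli
    have hli' : LinearIndependent ℂ ![(⟨v, hv⟩ : K), ⟨w, hw⟩] := by
      apply LinearIndependent.of_comp K.subtype
      convert hli using 1
      funext i
      fin_cases i <;> rfl
    have h2 : 2 ≤ finrank ℂ K := by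
      simpa using hli'.fintype_card_le_finrank
    have h3 : finrank ℂ K ≤ 3 := hker3 pl hpl0
    have hcase : finrank ℂ K = 2 ∨ finrank ℂ K = 3 := by omega
    rcases hcase with hfk | hfk
    · -- dimension 2 is impossible: the form would be nondegenerate alternating on a
      -- 5-dimensional complement
      obtain ⟨C, hC⟩ := Submodule.exists_isCompl K
      have hCd : finrank ℂ C = 5 := by
        have := Submodule.finrank_add_eq_of_isCompl hC
        omega
      set B : C →ₗ[ℂ] C →ₗ[ℂ] ℂ := (a.compr₂ pl).compl₁₂ C.subtype C.subtype with hB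
      have hBapp : ∀ c d : C, B c d = p (a c d) := by
        intro c d
        simp [hB, LinearMap.compl₁₂_apply, LinearMap.compr₂_apply, hpldef]
      have hBnd : LinearMap.BilinForm.Nondegenerate B := by
        refine LinearMap.BilinForm.Nondegenerate.ofSeparatingLeft ?_
        intro c hc
        have hcK : (c : V) ∈ K := by
          rw [hmemK]
          intro u
          have hu : u ∈ K ⊔ C := by rw [hC.sup_eq_top]; trivial
          rw [Submodule.mem_sup] at hu
          obtain ⟨k, hk, d, hd, rfl⟩ := hu
          have hk0 : p (a k (c : V)) = 0 := (hmemK k).mp hk (c : V)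
          have h1 : p (a (c : V) k) = 0 := by
            rw [hskew k (c : V)]
            simp [hk0]
          have hd2 : p (a (c : V) d) = 0 := by
            have := hc ⟨d, hd⟩
            rw [hBapp] at this
            exact this
          rw [map_add, map_add, h1, hd2, add_zero]
        have hcb : (c : V) ∈ K ⊓ C := ⟨hcK, c.2⟩
        rw [hC.inf_eq_bot, Submodule.mem_bot] at hcb
        exact Subtype.ext hcb
      -- nondegenerate alternating form on odd-dimensional space: contradiction
      let b := finBasis ℂ C
      have hdet := (LinearMap.BilinForm.nondegenerate_iff_det_ne_zero b).mp hBnd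
      apply hdet
      have hskewM : (LinearMap.BilinForm.toMatrix b B)ᵀ = -(LinearMap.BilinForm.toMatrix b B) := by
        ext i j
        simp only [Matrix.transpose_apply, Matrix.neg_apply, LinearMap.BilinForm.toMatrix_apply]
        rw [hBapp, hBapp, hskew (b i : V) (b j : V)]
        simp
      have h1 : (LinearMap.BilinForm.toMatrix b B).det =
          ((LinearMap.BilinForm.toMatrix b B)ᵀ).det := (Matrix.det_transpose _).symm
      rw [hskewM, Matrix.det_neg] at h1
      have hcard : ((-1 : ℂ)) ^ Fintype.card (Fin (finrank ℂ C)) = -1 := by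
        rw [Fintype.card_fin, hCd]
        norm_num
      rw [hcard, neg_one_mul] at h1
      have h2' : (2 : ℂ) * (LinearMap.BilinForm.toMatrix b B).det = 0 := by
        linear_combination h1
      have := mul_eq_zero.mp h2'
      rcases this with h | h
      · exact absurd h two_ne_zero
      · exact h
    · -- dimension 3: use the transversality hypothesis
      set v' : K := ⟨v, hv⟩ with hv'
      set w' : K := ⟨w, hw⟩ with hw'
      let bS := Basis.span hli'
      obtain ⟨f, hf⟩ := LinearMap.exists_extend (bS.coord 0)
      obtain ⟨g, hg⟩ := LinearMap.exists_extend (bS.coord 1)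
      have hbS0 : (↑(bS 0) : K) = v' := congrArg Subtype.val (Basis.span_apply (R := ℂ) hli' 0)
      have hbS1 : (↑(bS 1) : K) = w' := congrArg Subtype.val (Basis.span_apply (R := ℂ) hli' 1)
      have hfv : f v' = 1 := by
        have h := DFunLike.congr_fun hf (bS 0)
        simpa [hbS0, hbS1] using h
      have hfw : f w' = 0 := by
        have h := DFunLike.congr_fun hf (bS 1)
        simpa [hbS0, hbS1, Finsupp.single_apply] using h
      have hgv : g v' = 0 := by
        have h := DFunLike.congr_fun hg (bS 0)
        simpa [hbS0, hbS1, Finsupp.single_apply] using h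
      have hgw : g w' = 1 := by
        have h := DFunLike.congr_fun hg (bS 1)
        simpa [hbS0, hbS1] using h
      set β : K →ₗ[ℂ] K →ₗ[ℂ] ℂ := f.smulRight g - g.smulRight f with hβ
      have hβapp : ∀ u z : K, β u z = f u * g z - g u * f z := by
        intro u z
        simp [hβ, LinearMap.smulRight_apply, smul_eq_mul]
      obtain ⟨q, hq⟩ := htrans pl hpl0 hfk β (by
        intro u
        rw [hβapp]
        ring)
      have hqvw := hq v' w'
      rw [hβapp, hfv, hgw, hgv, hfw] at hqvw
      have : q (a v w) = 1 := by simpa using hqvw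
      rw [havw] at this
      simp at this
  have hac : ∀ v w : V, acCLM a v w = a v w := acCLM_apply a
  have hWe : W = fun z : ((Fin 2 → ℂ) →L[ℂ] V) × (V →L[ℂ] ℂ) =>
      z.2 (acCLM a (z.1 e0) (z.1 e1)) := by
    funext z
    obtain ⟨x', p'⟩ := z
    rw [hW x' p', hac]
  have d0 : HasFDerivAt (fun z : ((Fin 2 → ℂ) →L[ℂ] V) × (V →L[ℂ] ℂ) => z.1 e0)
      ((ContinuousLinearMap.fst ℂ ((Fin 2 → ℂ) →L[ℂ] V) (V →L[ℂ] ℂ)).flip e0) (x, p) := by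
    have h := (hasFDerivAt_fst (p := (x, p))).clm_apply (hasFDerivAt_const e0 (x, p))
    simpa using h
  have d1 : HasFDerivAt (fun z : ((Fin 2 → ℂ) →L[ℂ] V) × (V →L[ℂ] ℂ) => z.1 e1)
      ((ContinuousLinearMap.fst ℂ ((Fin 2 → ℂ) →L[ℂ] V) (V →L[ℂ] ℂ)).flip e1) (x, p) := by
    have h := (hasFDerivAt_fst (p := (x, p))).clm_apply (hasFDerivAt_const e1 (x, p))
    simpa using h
  have dm : HasFDerivAt (fun z : ((Fin 2 → ℂ) →L[ℂ] V) × (V →L[ℂ] ℂ) => acCLM a (z.1 e0))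
      ((acCLM a).comp ((ContinuousLinearMap.fst ℂ ((Fin 2 → ℂ) →L[ℂ] V) (V →L[ℂ] ℂ)).flip e0))
      (x, p) := (acCLM a).hasFDerivAt.comp (x, p) d0
  have dW := hasFDerivAt_snd.clm_apply (dm.clm_apply d1)
  have hfderiv : fderiv ℂ W (x, p) =
      ContinuousLinearMap.comp p
          ((acCLM a (x e0)).comp
              ((ContinuousLinearMap.fst ℂ ((Fin 2 → ℂ) →L[ℂ] V) (V →L[ℂ] ℂ)).flip e1) +
            ((acCLM a).comp
                ((ContinuousLinearMap.fst ℂ ((Fin 2 → ℂ) →L[ℂ] V) (V →L[ℂ] ℂ)).flip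
                  e0)).flip (x e1)) +
        (ContinuousLinearMap.snd ℂ ((Fin 2 → ℂ) →L[ℂ] V) (V →L[ℂ] ℂ)).flip
          (acCLM a (x e0) (x e1)) := by
    rw [hWe]
    exact dW.fderiv
  rw [hfderiv]
  constructor
  · intro h
    have happ : ∀ y : ((Fin 2 → ℂ) →L[ℂ] V) × (V →L[ℂ] ℂ),
        p (a (x e0) (y.1 e1)) + p (a (y.1 e0) (x e1)) + y.2 (a (x e0) (x e1)) = 0 := by
      intro y
      have h' := DFunLike.congr_fun h y
      simp only [ContinuousLinearMap.add_apply, ContinuousLinearMap.comp_apply,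
        ContinuousLinearMap.flip_apply, ContinuousLinearMap.coe_fst',
        ContinuousLinearMap.coe_snd', ContinuousLinearMap.zero_apply, map_add,
        acCLM_apply] at h'
      linear_combination h'
    have hA : a (x e0) (x e1) = 0 := by
      refine (Module.forall_dual_apply_eq_zero_iff ℂ _).mp ?_
      intro φ
      have hy := happ (0, LinearMap.toContinuousLinearMap φ)
      simpa using hy
    have hxe1 : x e1 ∈ K := by
      rw [hmemK]
      intro u
      have hy := happ ((ContinuousLinearMap.proj 0 : (Fin 2 → ℂ) →L[ℂ] ℂ).smulRight u, 0)
      simp [he0, he1, Pi.single_apply] at hy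
      rw [show a (x e1) u = - a u (x e1) from hskew u (x e1)]
      simp [hy, he1]
    have hxe0 : x e0 ∈ K := by
      rw [hmemK]
      intro u
      have hy := happ ((ContinuousLinearMap.proj 1 : (Fin 2 → ℂ) →L[ℂ] ℂ).smulRight u, 0)
      simpa [he0, he1, Pi.single_apply] using hy
    constructor
    · rw [hrange, Submodule.span_le]
      rintro u hu
      simp only [Set.mem_insert_iff, Set.mem_singleton_iff] at hu
      rcases hu with rfl | rfl
      exacts [hxe0, hxe1]
    · rw [hrange]
      exact hdep_rank _ _ (hkey _ _ hxe0 hxe1 hA)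
  · rintro ⟨h1, h2⟩
    have hxe0 : x e0 ∈ K := h1 ⟨e0, rfl⟩
    have hxe1 : x e1 ∈ K := h1 ⟨e1, rfl⟩
    have hA : a (x e0) (x e1) = 0 := by
      by_cases h0 : x e0 = 0
      · rw [h0]
        simp
      · have hsp : Submodule.span ℂ {x e0} ≤ LinearMap.range x.toLinearMap :=
          (Submodule.span_singleton_le_iff_mem _ _).mpr ⟨e0, rfl⟩
        have heq : Submodule.span ℂ {x e0} = LinearMap.range x.toLinearMap :=
          Submodule.eq_of_le_of_finrank_le hsp
            (le_trans h2 (le_of_eq (finrank_span_singleton h0).symm))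
        have hmem : x e1 ∈ Submodule.span ℂ {x e0} := heq ▸ ⟨e1, rfl⟩
        obtain ⟨c, hc⟩ := Submodule.mem_span_singleton.mp hmem
        rw [← hc]
        simp [halt]
    have t1 : ∀ u, p (a (x e0) u) = 0 := (hmemK _).mp hxe0
    have t2 : ∀ u, p (a u (x e1)) = 0 := by
      intro u
      rw [show a u (x e1) = - a (x e1) u from hskew (x e1) u]
      simp [(hmemK _).mp hxe1 u]
    apply ContinuousLinearMap.ext
    intro y
    simp [ContinuousLinearMap.add_apply, ContinuousLinearMap.comp_apply,
      ContinuousLinearMap.flip_apply, ContinuousLinearMap.coe_fst',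
      ContinuousLinearMap.coe_snd', map_add, hA, t1, t2]
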